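/- Let D = Z_2(t) and A, B ∈ D, and let f : D → D be defined by f((P(t²)+Q(t²)t)/(R(t²)+S(t²)t)) = ((P(t)R(t)+Q(t)S(t)t)A + (P(t)S(t)+Q(t)R(t))B)/(R(t²)+S(t²)t). Then x f(x^{-1}) = f(x) for every nonzero x ∈ D; equivalently, x^{-1} f(x) + f(x^{-1}) = 0 for all x ≠ 0. -/

import Mathlib

open Polynomial

lemma decompP (n : Polynomial (ZMod 2)) :
    ∃ P Q : Polynomial (ZMod 2), n = aeval (X ^ 2 : Polynomial (ZMod 2)) P + aeval (X ^ 2 : Polynomial (ZMod 2)) Q * X := by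
  induction n using Polynomial.induction_on' with
  | add p q hp hq =>
    obtain ⟨P1, Q1, h1⟩ := hp; obtain ⟨P2, Q2, h2⟩ := hq
    exact ⟨P1 + P2, Q1 + Q2, by simp [h1, h2]; ring⟩
  | monomial m c =>
    rcases Nat.even_or_odd m with ⟨k, hk⟩ | ⟨k, hk⟩
    · refine ⟨C c * X ^ k, 0, ?_⟩
      rw [map_zero, zero_mul, add_zero, map_mul, aeval_C, aeval_X_pow, ← pow_mul,
        Polynomial.algebraMap_eq, C_mul_X_pow_eq_monomial, hk, two_mul]
    · refine ⟨0, C c * X ^ k, ?_⟩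
      rw [map_zero, zero_add, map_mul, aeval_C, aeval_X_pow, ← pow_mul,
        Polynomial.algebraMap_eq, mul_assoc, ← pow_succ, C_mul_X_pow_eq_monomial, hk,
        two_mul]

lemma keyR (p : Polynomial (ZMod 2)) :
    algebraMap (Polynomial (ZMod 2)) (RatFunc (ZMod 2)) (aeval (X ^ 2 : Polynomial (ZMod 2)) p) =
      aeval ((RatFunc.X : RatFunc (ZMod 2)) ^ 2) p := by
  have h1 : ((RatFunc.X : RatFunc (ZMod 2)) ^ 2) =
      (IsScalarTower.toAlgHom (ZMod 2) (Polynomial (ZMod 2)) (RatFunc (ZMod 2))) (X ^ 2) := by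
    simp [← RatFunc.algebraMap_X]
  rw [h1, aeval_algHom_apply]
  rfl

lemma decompR (n : Polynomial (ZMod 2)) :
    ∃ P Q : Polynomial (ZMod 2),
      algebraMap (Polynomial (ZMod 2)) (RatFunc (ZMod 2)) n =
        aeval ((RatFunc.X : RatFunc (ZMod 2)) ^ 2) P + aeval ((RatFunc.X : RatFunc (ZMod 2)) ^ 2) Q * RatFunc.X := by
  obtain ⟨P, Q, h⟩ := decompP n
  exact ⟨P, Q, by rw [h, map_add, map_mul, keyR, keyR, RatFunc.algebraMap_X]⟩

open Polynomial in
theorem stmt_17 (A B : RatFunc (ZMod 2)) (f : RatFunc (ZMod 2) → RatFunc (ZMod 2))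
    (hf : ∀ P Q R S : Polynomial (ZMod 2),
      aeval ((RatFunc.X : RatFunc (ZMod 2)) ^ 2) R + aeval ((RatFunc.X : RatFunc (ZMod 2)) ^ 2) S * (RatFunc.X : RatFunc (ZMod 2)) ≠ 0 →
      f ((aeval ((RatFunc.X : RatFunc (ZMod 2)) ^ 2) P + aeval ((RatFunc.X : RatFunc (ZMod 2)) ^ 2) Q * (RatFunc.X : RatFunc (ZMod 2))) /
          (aeval ((RatFunc.X : RatFunc (ZMod 2)) ^ 2) R + aeval ((RatFunc.X : RatFunc (ZMod 2)) ^ 2) S * (RatFunc.X : RatFunc (ZMod 2)))) =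
        ((aeval (RatFunc.X : RatFunc (ZMod 2)) P * aeval (RatFunc.X : RatFunc (ZMod 2)) R +
            aeval (RatFunc.X : RatFunc (ZMod 2)) Q * aeval (RatFunc.X : RatFunc (ZMod 2)) S * (RatFunc.X : RatFunc (ZMod 2))) * A +
          (aeval (RatFunc.X : RatFunc (ZMod 2)) P * aeval (RatFunc.X : RatFunc (ZMod 2)) S + aeval (RatFunc.X : RatFunc (ZMod 2)) Q * aeval (RatFunc.X : RatFunc (ZMod 2)) R) * B) /
          (aeval ((RatFunc.X : RatFunc (ZMod 2)) ^ 2) R + aeval ((RatFunc.X : RatFunc (ZMod 2)) ^ 2) S * (RatFunc.X : RatFunc (ZMod 2)))) :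
    ∀ x : RatFunc (ZMod 2), x ≠ 0 →
      x * f x⁻¹ = f x ∧ x⁻¹ * f x + f x⁻¹ = 0 := by
  intro x hx
  obtain ⟨P, Q, hN⟩ := decompR x.num
  obtain ⟨R, S, hD⟩ := decompR x.denom
  have hNne : aeval ((RatFunc.X : RatFunc (ZMod 2)) ^ 2) P + aeval ((RatFunc.X : RatFunc (ZMod 2)) ^ 2) Q * RatFunc.X ≠ 0 := by
    rw [← hN]
    simpa using RatFunc.num_ne_zero hx
  have hDne : aeval ((RatFunc.X : RatFunc (ZMod 2)) ^ 2) R + aeval ((RatFunc.X : RatFunc (ZMod 2)) ^ 2) S * RatFunc.X ≠ 0 := by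
    rw [← hD]
    simpa using x.denom_ne_zero
  have hx1 : x = (aeval ((RatFunc.X : RatFunc (ZMod 2)) ^ 2) P + aeval ((RatFunc.X : RatFunc (ZMod 2)) ^ 2) Q * RatFunc.X) /
      (aeval ((RatFunc.X : RatFunc (ZMod 2)) ^ 2) R + aeval ((RatFunc.X : RatFunc (ZMod 2)) ^ 2) S * RatFunc.X) := by
    rw [← hN, ← hD, RatFunc.num_div_denom]
  have hx2 : x⁻¹ = (aeval ((RatFunc.X : RatFunc (ZMod 2)) ^ 2) R + aeval ((RatFunc.X : RatFunc (ZMod 2)) ^ 2) S * RatFunc.X) /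
      (aeval ((RatFunc.X : RatFunc (ZMod 2)) ^ 2) P + aeval ((RatFunc.X : RatFunc (ZMod 2)) ^ 2) Q * RatFunc.X) := by
    rw [hx1, inv_div]
  have h1 := hf P Q R S hDne
  have h2 := hf R S P Q hNne
  rw [← hx1] at h1
  rw [← hx2] at h2
  have hfx : x * f x⁻¹ = f x := by
    rw [h1, h2, hx1]
    rw [div_mul_div_comm, div_eq_div_iff (mul_ne_zero hDne hNne) hDne]
    ring
  refine ⟨hfx, ?_⟩
  have h3 : f x⁻¹ = x⁻¹ * f x := by
    rw [← hfx, ← mul_assoc, inv_mul_cancel₀ hx, one_mul]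
  rw [h3]
  haveI : CharP (RatFunc (ZMod 2)) 2 :=
    charP_of_injective_algebraMap (algebraMap (ZMod 2) (RatFunc (ZMod 2))).injective 2
  exact CharTwo.add_self_eq_zero _
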